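/- For a unilateral weighted shift W_λ in ℓ²(ℕ), the square W_λ² is a closed operator if and only if there exists c > 0 such that |λ_k|² ≤ c(1 + |λ_k λ_{k+1}|²) for all k ∈ ℕ. -/

import Mathlib

open InnerProductSpace in
/-- A conjugation on a complex inner product space: an antilinear involution
satisfying `⟪Cf, Cg⟫ = ⟪g, f⟫`. -/
structure Conjugation (H : Type*) [NormedAddCommGroup H] [InnerProductSpace ℂ H] where
  toFun : H → H
  map_add' : ∀ x y, toFun (x + y) = toFun x + toFun y
  map_smul' : ∀ (c : ℂ) (x : H), toFun (c • x) = (starRingEnd ℂ c) • toFun x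
  invol : ∀ x, toFun (toFun x) = x
  inner_map : ∀ x y, (inner ℂ (toFun x) (toFun y) : ℂ) = inner ℂ y x

/-- `T` is `C`-symmetric: `T ⊆ C T* C`. -/
noncomputable def CSymmetric {H : Type*} [NormedAddCommGroup H] [InnerProductSpace ℂ H]
    [CompleteSpace H] (C : Conjugation H) (T : H →ₗ.[ℂ] H) : Prop :=
  ∀ x : T.domain, ∃ hx : C.toFun x ∈ T.adjoint.domain,
    C.toFun (T.adjoint ⟨C.toFun x, hx⟩) = T x

/-- `T` is `C`-selfadjoint: `T = C T* C`. -/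
noncomputable def CSelfAdjoint {H : Type*} [NormedAddCommGroup H] [InnerProductSpace ℂ H]
    [CompleteSpace H] (C : Conjugation H) (T : H →ₗ.[ℂ] H) : Prop :=
  CSymmetric C T ∧ ∀ y : H, C.toFun y ∈ T.adjoint.domain → y ∈ T.domain

/-- Composition of partially defined linear maps, with its natural (maximal) domain. -/
noncomputable def LinearPMap.pcomp {R E F G : Type*} [Ring R] [AddCommGroup E] [Module R E]
    [AddCommGroup F] [Module R F] [AddCommGroup G] [Module R G]
    (g : F →ₗ.[R] G) (f : E →ₗ.[R] F) : E →ₗ.[R] G :=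
  g.comp (f.domRestrict ((g.domain.comap f.toFun).map f.domain.subtype))
    (by
      rintro ⟨x, hx1, hx2⟩
      obtain ⟨y, hy, hyx⟩ := hx1
      subst hyx
      exact hy)

/-- Natural powers of a partially defined linear map, `T^(n+1) = T ∘ T^n`, with
`T^0` the identity on the whole space. -/
noncomputable def LinearPMap.ppow {R E : Type*} [Ring R] [AddCommGroup E] [Module R E]
    (T : E →ₗ.[R] E) : ℕ → E →ₗ.[R] E
  | 0 => ⟨⊤, (⊤ : Submodule R E).subtype⟩
  | n + 1 => T.pcomp (T.ppow n)

/-- `W` is the unilateral weighted shift in `ℓ²(ℕ)` with weights `lam` (0-indexed: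
`W eₙ = lam n • e_{n+1}`): it has the maximal domain
`{f : Σ |lam n * f n|² < ∞}` and acts by `(W f)(n+1) = lam n * f n`, `(W f)(0) = 0`. -/
def IsWeightedShift (lam : ℕ → ℂ) (W : lp (fun _ : ℕ => ℂ) 2 →ₗ.[ℂ] lp (fun _ : ℕ => ℂ) 2) :
    Prop :=
  (∀ f : lp (fun _ : ℕ => ℂ) 2, f ∈ W.domain ↔ Memℓp (fun n => lam n * f n) 2) ∧
  (∀ f : W.domain, (W f : lp (fun _ : ℕ => ℂ) 2) 0 = 0 ∧
    ∀ n : ℕ, (W f : lp (fun _ : ℕ => ℂ) 2) (n + 1) = lam n * (f : lp (fun _ : ℕ => ℂ) 2) n)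

/-- The canonical orthonormal basis of `ℓ²(ℕ)` (0-indexed). -/
noncomputable def e (n : ℕ) : lp (fun _ : ℕ => ℂ) 2 := lp.single 2 n 1

open Filter Topology ENNReal
set_option maxHeartbeats 1000000
set_option synthInstance.maxHeartbeats 400000

noncomputable section
local notation "H2" => lp (fun _ : ℕ => ℂ) 2

lemma memtwo (f : ℕ → ℂ) : Memℓp f 2 ↔ Summable (fun n => ‖f n‖ ^ 2) := by
  rw [memℓp_gen_iff (by norm_num)]
  norm_num

lemma tendsto_coord {u : ℕ → H2} {f : H2} (h : Tendsto u atTop (𝓝 f)) (n : ℕ) :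
    Tendsto (fun j => (u j : ∀ _ : ℕ, ℂ) n) atTop (𝓝 ((f : ∀ _ : ℕ, ℂ) n)) := by
  rw [tendsto_iff_norm_sub_tendsto_zero] at h ⊢
  refine squeeze_zero (fun j => norm_nonneg _) (fun j => ?_) h
  have := lp.norm_apply_le_norm (by norm_num : (2 : ℝ≥0∞) ≠ 0) (u j - f) n
  simpa [lp.coeFn_sub, Pi.sub_apply] using this

lemma single_zero (i : ℕ) : (lp.single 2 i (0 : ℂ) : H2) = 0 := by
  apply lp.ext; funext j
  by_cases h : j = i
  · subst h; simp [lp.single_apply_self]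
  · simp [lp.single_apply_ne _ _ _ h]

lemma memℓp_of_finite (f : ℕ → ℂ) (s : Finset ℕ) (h : ∀ j ∉ s, f j = 0) : Memℓp f 2 := by
  rw [memtwo]
  exact summable_of_ne_finset_zero (s := s) (fun j hj => by simp [h j hj])
end

section PComp
variable {R E F G : Type*} [Ring R] [AddCommGroup E] [Module R E]
    [AddCommGroup F] [Module R F] [AddCommGroup G] [Module R G]
    (g : F →ₗ.[R] G) (f : E →ₗ.[R] F)

lemma pcomp_domain_eq :
    (g.pcomp f).domain = ((g.domain.comap f.toFun).map f.domain.subtype) ⊓ f.domain := rfl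

lemma mem_pcomp_iff {x : E} :
    x ∈ (g.pcomp f).domain ↔ ∃ hx : x ∈ f.domain, f ⟨x, hx⟩ ∈ g.domain := by
  rw [pcomp_domain_eq, Submodule.mem_inf]
  constructor
  · rintro ⟨hS, hxf⟩
    rw [Submodule.mem_map] at hS
    obtain ⟨y, hy, hyx⟩ := hS
    refine ⟨hxf, ?_⟩
    have hxy : (⟨x, hxf⟩ : f.domain) = y := Subtype.ext hyx.symm
    rw [hxy]
    exact hy
  · rintro ⟨hx, hfx⟩
    exact ⟨Submodule.mem_map.2 ⟨⟨x, hx⟩, by simpa [Submodule.mem_comap] using hfx, rfl⟩, hx⟩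

lemma pcomp_apply' {x : E} (hmem : x ∈ (g.pcomp f).domain)
    (hx : x ∈ f.domain) (hfx : f ⟨x, hx⟩ ∈ g.domain) :
    (g.pcomp f) ⟨x, hmem⟩ = g ⟨f ⟨x, hx⟩, hfx⟩ := by
  show g.toFun _ = g.toFun _
  congr 1

end PComp

noncomputable section
variable {lam : ℕ → ℂ} {W : lp (fun _ : ℕ => ℂ) 2 →ₗ.[ℂ] lp (fun _ : ℕ => ℂ) 2}
  (hW : IsWeightedShift lam W)
local notation "H2" => lp (fun _ : ℕ => ℂ) 2

include hW

lemma single_mem_W (n : ℕ) (b : ℂ) : (lp.single 2 n b : H2) ∈ W.domain := by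
  rw [hW.1]
  refine memℓp_of_finite _ {n} (fun j hj => ?_)
  rw [lp.single_apply_ne _ _ _ (by simpa using hj), mul_zero]

lemma W_single (n : ℕ) (b : ℂ) :
    (W ⟨lp.single 2 n b, single_mem_W hW n b⟩ : H2) = lp.single 2 (n + 1) (lam n * b) := by
  apply lp.ext; funext j
  match j with
  | 0 =>
    rw [(hW.2 _).1, lp.single_apply_ne _ _ _ (by simp : (0:ℕ) ≠ n + 1)]
  | (j + 1) =>
    rw [(hW.2 _).2 j]
    by_cases hj : j = n
    · subst hj
      rw [lp.single_apply_self, lp.single_apply_self]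
    · rw [lp.single_apply_ne _ _ _ hj, lp.single_apply_ne _ _ _ (by simpa using hj), mul_zero]

lemma single_mem_sq (n : ℕ) (b : ℂ) : (lp.single 2 n b : H2) ∈ (W.pcomp W).domain := by
  rw [mem_pcomp_iff]
  refine ⟨single_mem_W hW n b, ?_⟩
  rw [W_single hW]
  exact single_mem_W hW (n + 1) (lam n * b)

lemma sq_single (n : ℕ) (b : ℂ) :
    ((W.pcomp W) ⟨lp.single 2 n b, single_mem_sq hW n b⟩ : H2)
      = lp.single 2 (n + 2) (lam (n + 1) * (lam n * b)) := by
  have h1 := single_mem_W hW n b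
  have h2 : (W ⟨lp.single 2 n b, h1⟩ : H2) ∈ W.domain := by
    rw [W_single hW]; exact single_mem_W hW (n + 1) (lam n * b)
  rw [pcomp_apply' W W (single_mem_sq hW n b) h1 h2]
  have h3 : (⟨(W ⟨lp.single 2 n b, h1⟩ : H2), h2⟩ : W.domain)
      = ⟨lp.single 2 (n + 1) (lam n * b), single_mem_W hW (n + 1) (lam n * b)⟩ :=
    Subtype.ext (W_single hW n b)
  rw [h3, W_single hW]

lemma sq_coords (x : (W.pcomp W).domain) :
    ((W.pcomp W) x : ∀ _ : ℕ, ℂ) 0 = 0 ∧ ((W.pcomp W) x : ∀ _ : ℕ, ℂ) 1 = 0 ∧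
    ∀ n : ℕ, ((W.pcomp W) x : ∀ _ : ℕ, ℂ) (n + 2)
      = lam (n + 1) * (lam n * ((x : H2) : ∀ _ : ℕ, ℂ) n) := by
  obtain ⟨hx, hWx⟩ := (mem_pcomp_iff W W).1 x.2
  have hx' : x = ⟨(x : H2), x.2⟩ := rfl
  rw [hx', pcomp_apply' W W x.2 hx hWx]
  refine ⟨(hW.2 _).1, ?_, fun n => ?_⟩
  · rw [(hW.2 _).2 0, (hW.2 _).1, mul_zero]
  · rw [(hW.2 _).2 (n + 1), (hW.2 _).2 n]

lemma mem_sq_iff (f : H2) :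
    f ∈ (W.pcomp W).domain ↔
      (Summable fun n => ‖lam n * (f : ∀ _ : ℕ, ℂ) n‖ ^ 2) ∧
      (Summable fun n => ‖lam (n + 1) * (lam n * (f : ∀ _ : ℕ, ℂ) n)‖ ^ 2) := by
  rw [mem_pcomp_iff]
  constructor
  · rintro ⟨hx, hWx⟩
    have h1 := (memtwo _).1 ((hW.1 f).1 hx)
    have h2 := (memtwo _).1 ((hW.1 _).1 hWx)
    refine ⟨h1, ?_⟩
    have h3 : Summable fun n =>
        ‖lam (n + 1) * (W ⟨f, hx⟩ : ∀ _ : ℕ, ℂ) (n + 1)‖ ^ 2 :=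
      (summable_nat_add_iff
        (f := fun n => ‖lam n * (W ⟨f, hx⟩ : ∀ _ : ℕ, ℂ) n‖ ^ 2) 1).2 h2
    refine h3.congr fun n => ?_
    rw [(hW.2 _).2 n]
  · rintro ⟨h1, h2⟩
    have hx : f ∈ W.domain := (hW.1 f).2 ((memtwo _).2 h1)
    refine ⟨hx, (hW.1 _).2 ((memtwo _).2 ?_)⟩
    apply (summable_nat_add_iff
      (f := fun n => ‖lam n * (W ⟨f, hx⟩ : ∀ _ : ℕ, ℂ) n‖ ^ 2) 1).1
    refine (h2.congr fun n => ?_)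
    rw [(hW.2 _).2 n]

lemma closed_of_cond
    (h : ∃ c : ℝ, 0 < c ∧ ∀ k : ℕ, ‖lam k‖ ^ 2 ≤ c * (1 + ‖lam k * lam (k + 1)‖ ^ 2)) :
    (W.pcomp W).IsClosed := by
  obtain ⟨c, hc, hcb⟩ := h
  apply IsSeqClosed.isClosed
  intro x p hxg hlim
  obtain ⟨f, g⟩ := p
  choose y hy1 hy2 using fun j => (LinearPMap.mem_graph_iff _).1 (hxg j)
  have hf : Tendsto (fun j => (x j).1) atTop (𝓝 f) := (continuous_fst.tendsto _).comp hlim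
  have hg : Tendsto (fun j => (x j).2) atTop (𝓝 g) := (continuous_snd.tendsto _).comp hlim
  have hco := fun j => sq_coords hW (y j)
  have e1 : ∀ j n, ((x j).1 : ∀ _ : ℕ, ℂ) n = ((y j : H2) : ∀ _ : ℕ, ℂ) n := by
    intro j n; rw [← hy1 j]
  have e2 : ∀ j n, ((x j).2 : ∀ _ : ℕ, ℂ) n = (((W.pcomp W) (y j)) : ∀ _ : ℕ, ℂ) n := by
    intro j n; rw [← hy2 j]
  have hg0 : (g : ∀ _ : ℕ, ℂ) 0 = 0 :=
    tendsto_nhds_unique (tendsto_coord hg 0)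
      ((tendsto_const_nhds : Tendsto (fun _ : ℕ => (0:ℂ)) atTop (𝓝 0)).congr fun j => by rw [e2 j 0, (hco j).1])
  have hg1 : (g : ∀ _ : ℕ, ℂ) 1 = 0 :=
    tendsto_nhds_unique (tendsto_coord hg 1)
      ((tendsto_const_nhds : Tendsto (fun _ : ℕ => (0:ℂ)) atTop (𝓝 0)).congr fun j => by rw [e2 j 1, (hco j).2.1])
  have hgn : ∀ n : ℕ, (g : ∀ _ : ℕ, ℂ) (n + 2) = lam (n + 1) * (lam n * (f : ∀ _ : ℕ, ℂ) n) := by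
    intro n
    refine tendsto_nhds_unique (tendsto_coord hg (n + 2)) ?_
    have := ((tendsto_coord hf n).const_mul (lam n)).const_mul (lam (n + 1))
    refine this.congr fun j => ?_
    rw [e2 j (n + 2), (hco j).2.2 n, e1 j n]
  have hgs : Summable fun n => ‖(g : ∀ _ : ℕ, ℂ) n‖ ^ 2 := (memtwo _).1 (lp.memℓp g)
  have h2 : Summable fun n => ‖lam (n + 1) * (lam n * (f : ∀ _ : ℕ, ℂ) n)‖ ^ 2 := by
    refine ((summable_nat_add_iff 2).2 hgs).congr fun n => ?_
    rw [hgn n]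
  have hfs : Summable fun n => ‖(f : ∀ _ : ℕ, ℂ) n‖ ^ 2 := (memtwo _).1 (lp.memℓp f)
  have h1 : Summable fun n => ‖lam n * (f : ∀ _ : ℕ, ℂ) n‖ ^ 2 := by
    refine Summable.of_nonneg_of_le (fun n => by positivity) (fun n => ?_)
      ((hfs.mul_left c).add (h2.mul_left c))
    have hb := hcb n
    have e3 : ‖lam n * (f : ∀ _ : ℕ, ℂ) n‖ ^ 2 = ‖lam n‖ ^ 2 * ‖(f : ∀ _ : ℕ, ℂ) n‖ ^ 2 := by
      rw [norm_mul, mul_pow]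
    have e4 : ‖lam (n + 1) * (lam n * (f : ∀ _ : ℕ, ℂ) n)‖ ^ 2
        = ‖lam n * lam (n + 1)‖ ^ 2 * ‖(f : ∀ _ : ℕ, ℂ) n‖ ^ 2 := by
      simp [norm_mul, mul_pow]; ring
    have hfn : (0:ℝ) ≤ ‖(f : ∀ _ : ℕ, ℂ) n‖ ^ 2 := by positivity
    calc ‖lam n * (f : ∀ _ : ℕ, ℂ) n‖ ^ 2
        = ‖lam n‖ ^ 2 * ‖(f : ∀ _ : ℕ, ℂ) n‖ ^ 2 := e3
      _ ≤ (c * (1 + ‖lam n * lam (n + 1)‖ ^ 2)) * ‖(f : ∀ _ : ℕ, ℂ) n‖ ^ 2 :=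
          mul_le_mul_of_nonneg_right hb hfn
      _ = c * ‖(f : ∀ _ : ℕ, ℂ) n‖ ^ 2
          + c * (‖lam n * lam (n + 1)‖ ^ 2 * ‖(f : ∀ _ : ℕ, ℂ) n‖ ^ 2) := by ring
      _ = c * ‖(f : ∀ _ : ℕ, ℂ) n‖ ^ 2
          + c * ‖lam (n + 1) * (lam n * (f : ∀ _ : ℕ, ℂ) n)‖ ^ 2 := by rw [e4]
  have hmem : f ∈ (W.pcomp W).domain := (mem_sq_iff hW f).2 ⟨h1, h2⟩
  refine (LinearPMap.mem_graph_iff _).2 ⟨⟨f, hmem⟩, rfl, ?_⟩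
  apply lp.ext; funext n
  obtain ⟨c0, c1, cn⟩ := sq_coords hW (⟨f, hmem⟩ : (W.pcomp W).domain)
  match n with
  | 0 => rw [c0, hg0]
  | 1 => rw [c1, hg1]
  | (n + 2) => rw [cn n, hgn n]

lemma not_closed_of_not_cond
    (h : ¬ ∃ c : ℝ, 0 < c ∧ ∀ k : ℕ, ‖lam k‖ ^ 2 ≤ c * (1 + ‖lam k * lam (k + 1)‖ ^ 2)) :
    ¬ (W.pcomp W).IsClosed := by
  push_neg at h
  -- step 1: witnesses beyond any bound
  have key : ∀ k N : ℕ, ∃ j : ℕ,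
      N < j ∧ (2:ℝ) ^ k * (1 + ‖lam j * lam (j + 1)‖ ^ 2) < ‖lam j‖ ^ 2 := by
    intro k N
    set C : ℝ := 2 ^ k + 1 + ∑ i ∈ Finset.range (N + 1), ‖lam i‖ ^ 2 with hC
    have hsum_nonneg : (0:ℝ) ≤ ∑ i ∈ Finset.range (N + 1), ‖lam i‖ ^ 2 :=
      Finset.sum_nonneg fun i _ => by positivity
    have hCpos : 0 < C := by positivity
    obtain ⟨j, hj⟩ := h C hCpos
    have hq : (0:ℝ) ≤ ‖lam j * lam (j + 1)‖ ^ 2 := by positivity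
    have hNj : N < j := by
      by_contra hle
      push_neg at hle
      have h1 : ‖lam j‖ ^ 2 ≤ ∑ i ∈ Finset.range (N + 1), ‖lam i‖ ^ 2 :=
        Finset.single_le_sum (f := fun i => ‖lam i‖ ^ 2) (fun i _ => by positivity)
          (Finset.mem_range.2 (by omega))
      have h2 : C ≤ C * (1 + ‖lam j * lam (j + 1)‖ ^ 2) :=
        le_mul_of_one_le_right hCpos.le (by linarith)
      have h3 : (0:ℝ) < 2 ^ k := by positivity
      nlinarith
    refine ⟨j, hNj, lt_of_le_of_lt ?_ hj⟩
    apply mul_le_mul_of_nonneg_right _ (by positivity)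
    nlinarith
  choose F hlt hbig using key
  set m : ℕ → ℕ := fun k => Nat.rec (F 0 0) (fun k mk => F (k + 1) mk) k with hmdef
  have hms : ∀ k, m (k + 1) = F (k + 1) (m k) := fun k => rfl
  have hm : ∀ k, (2:ℝ) ^ k * (1 + ‖lam (m k) * lam (m k + 1)‖ ^ 2) < ‖lam (m k)‖ ^ 2 := by
    intro k
    cases k with
    | zero => exact hbig 0 0
    | succ k => rw [hms k]; exact hbig (k + 1) (m k)
  have hmono : StrictMono m := strictMono_nat_of_lt_succ fun k => by
    rw [hms k]; exact hlt (k + 1) (m k)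
  have hinj : Function.Injective m := hmono.injective
  have hinj2 : Function.Injective (fun k => m k + 2) := fun i j hij => by
    apply hinj; simpa using hij
  have h2k : ∀ k : ℕ, (0:ℝ) < 2 ^ k := fun k => by positivity
  have hlam_big : ∀ k, (2:ℝ) ^ k < ‖lam (m k)‖ ^ 2 := fun k =>
    lt_of_le_of_lt (by nlinarith [norm_nonneg (lam (m k) * lam (m k + 1)), h2k k]) (hm k)
  have hne : ∀ k, lam (m k) ≠ 0 := by
    intro k h0
    have := hlam_big k
    rw [h0] at this
    simp only [norm_zero] at this
    nlinarith [h2k k]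
  set a : ℕ → ℂ := fun k => (lam (m k))⁻¹ with hadef
  have ha : ∀ k, ‖a k‖ ^ 2 ≤ (1/2:ℝ) ^ k := by
    intro k
    have e1 : ‖a k‖ ^ 2 = (‖lam (m k)‖ ^ 2)⁻¹ := by
      rw [hadef]; simp [norm_inv, inv_pow]
    have e2 : ((1:ℝ)/2) ^ k = ((2:ℝ) ^ k)⁻¹ := by
      rw [one_div, inv_pow]
    rw [e1, e2]
    exact inv_anti₀ (h2k k) (hlam_big k).le
  have hmulone : ∀ k, lam (m k) * a k = 1 := fun k => mul_inv_cancel₀ (hne k)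
  have hb : ∀ k, ‖lam (m k + 1) * (lam (m k) * a k)‖ ^ 2 ≤ (1/2:ℝ) ^ k := by
    intro k
    rw [hmulone k, mul_one]
    have e : ‖lam (m k) * lam (m k + 1)‖ ^ 2 = ‖lam (m k)‖ ^ 2 * ‖lam (m k + 1)‖ ^ 2 := by
      rw [norm_mul, mul_pow]
    have hKK := hm k
    rw [e] at hKK
    have h1 : 2 ^ k * ‖lam (m k + 1)‖ ^ 2 ≤ 1 := by nlinarith [hlam_big k, h2k k]
    have h2 : ‖lam (m k + 1)‖ ^ 2 ≤ 1 / 2 ^ k := by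
      rw [le_div_iff₀ (h2k k)]; linarith
    calc ‖lam (m k + 1)‖ ^ 2 ≤ 1 / 2 ^ k := h2
      _ = (1/2:ℝ) ^ k := by rw [div_pow, one_pow]
  -- the vectors f and g
  set f0 : ℕ → ℂ := Function.extend m a (fun _ => 0) with hf0def
  set g0 : ℕ → ℂ := Function.extend (fun k => m k + 2)
    (fun k => lam (m k + 1) * (lam (m k) * a k)) (fun _ => 0) with hg0def
  have hf0m : ∀ k, f0 (m k) = a k := fun k => hinj.extend_apply a _ k
  have hg0m : ∀ k, g0 (m k + 2) = lam (m k + 1) * (lam (m k) * a k) := fun k =>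
    hinj2.extend_apply _ _ k
  have hf0z : ∀ n, n ∉ Set.range m → f0 n = 0 := fun n hn =>
    Function.extend_apply' _ _ _ (by simpa [Set.range] using hn)
  have hg0z : ∀ n, n ∉ Set.range (fun k => m k + 2) → g0 n = 0 := fun n hn =>
    Function.extend_apply' _ _ _ (by simpa [Set.range] using hn)
  have hgeom : Summable fun k : ℕ => ((1:ℝ)/2) ^ k :=
    summable_geometric_of_lt_one (by norm_num) (by norm_num)
  have hf0mem : Memℓp f0 2 := by
    rw [memtwo]
    rw [← Function.Injective.summable_iff hinj (fun n hn => by rw [hf0z n hn]; simp)]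
    refine Summable.of_nonneg_of_le
      (fun k => by simp only [Function.comp_apply]; positivity) (fun k => ?_) hgeom
    simp only [Function.comp_apply, hf0m k]
    exact ha k
  have hg0mem : Memℓp g0 2 := by
    rw [memtwo]
    rw [← Function.Injective.summable_iff hinj2 (fun n hn => by rw [hg0z n hn]; simp)]
    refine Summable.of_nonneg_of_le
      (fun k => by simp only [Function.comp_apply]; positivity) (fun k => ?_) hgeom
    simp only [Function.comp_apply, hg0m k]
    exact hb k
  set f : lp (fun _ : ℕ => ℂ) 2 := ⟨f0, hf0mem⟩ with hfdef
  set g : lp (fun _ : ℕ => ℂ) 2 := ⟨g0, hg0mem⟩ with hgdef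
  have hfcoe : (f : ∀ _ : ℕ, ℂ) = f0 := rfl
  have hgcoe : (g : ∀ _ : ℕ, ℂ) = g0 := rfl
  -- f is not in the domain of W²
  have hfnot : f ∉ (W.pcomp W).domain := by
    intro hmem
    have h1 := ((mem_sq_iff hW f).1 hmem).1
    rw [hfcoe] at h1
    have h2 := h1.comp_injective hinj
    have h3 : Summable fun _ : ℕ => (1:ℝ) := by
      refine h2.congr fun k => ?_
      simp only [Function.comp_apply, hf0m k, hmulone k]
      simp
    have h4 := h3.tendsto_atTop_zero
    have h5 : (1:ℝ) = 0 := tendsto_nhds_unique tendsto_const_nhds h4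
    exact one_ne_zero h5
  -- the approximating sums
  intro hcl
  apply hfnot
  have h0f := lp.hasSum_single (by norm_num : (2:ℝ≥0∞) ≠ ⊤) f
  have h0g := lp.hasSum_single (by norm_num : (2:ℝ≥0∞) ≠ ⊤) g
  have hsumf : HasSum (fun k => (lp.single 2 (m k) (a k) : lp (fun _ : ℕ => ℂ) 2)) f := by
    have hv : ∀ n ∉ Set.range m, (lp.single 2 n ((f : ∀ _ : ℕ, ℂ) n) : lp (fun _ : ℕ => ℂ) 2) = 0 := by
      intro n hn
      rw [hfcoe, hf0z n hn, single_zero]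
    have := (Function.Injective.hasSum_iff hinj hv).2 h0f
    refine this.congr_fun fun k => ?_
    simp only [Function.comp_apply, hfcoe, hf0m k]
  have hsumg : HasSum (fun k => (lp.single 2 (m k + 2)
      (lam (m k + 1) * (lam (m k) * a k)) : lp (fun _ : ℕ => ℂ) 2)) g := by
    have hv : ∀ n ∉ Set.range (fun k => m k + 2),
        (lp.single 2 n ((g : ∀ _ : ℕ, ℂ) n) : lp (fun _ : ℕ => ℂ) 2) = 0 := by
      intro n hn
      rw [hgcoe, hg0z n hn, single_zero]
    have := (Function.Injective.hasSum_iff hinj2 hv).2 h0g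
    refine this.congr_fun fun k => ?_
    simp only [Function.comp_apply, hgcoe, hg0m k]
  have htend : Tendsto (fun s : Finset ℕ =>
      ((∑ k ∈ s, (lp.single 2 (m k) (a k) : lp (fun _ : ℕ => ℂ) 2)),
       (∑ k ∈ s, (lp.single 2 (m k + 2) (lam (m k + 1) * (lam (m k) * a k))
          : lp (fun _ : ℕ => ℂ) 2)))) atTop (𝓝 (f, g)) :=
    Filter.Tendsto.prodMk_nhds hsumf hsumg
  have hmemgraph : ∀ s : Finset ℕ,
      ((∑ k ∈ s, (lp.single 2 (m k) (a k) : lp (fun _ : ℕ => ℂ) 2)),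
       (∑ k ∈ s, (lp.single 2 (m k + 2) (lam (m k + 1) * (lam (m k) * a k))
          : lp (fun _ : ℕ => ℂ) 2))) ∈ (W.pcomp W).graph := by
    intro s
    set X : ℕ → (W.pcomp W).domain := fun k =>
      ⟨lp.single 2 (m k) (a k), single_mem_sq hW (m k) (a k)⟩ with hXdef
    have hcoe : ((∑ k ∈ s, X k : (W.pcomp W).domain) : lp (fun _ : ℕ => ℂ) 2)
        = ∑ k ∈ s, (lp.single 2 (m k) (a k) : lp (fun _ : ℕ => ℂ) 2) := by
      rw [Submodule.coe_sum]
    have hval : (W.pcomp W) (∑ k ∈ s, X k)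
        = ∑ k ∈ s, (lp.single 2 (m k + 2) (lam (m k + 1) * (lam (m k) * a k))
            : lp (fun _ : ℕ => ℂ) 2) := by
      have hms' : (W.pcomp W) (∑ k ∈ s, X k) = ∑ k ∈ s, (W.pcomp W) (X k) :=
        map_sum ((W.pcomp W).toFun) X s
      rw [hms']
      exact Finset.sum_congr rfl fun k _ => sq_single hW (m k) (a k)
    have := LinearPMap.mem_graph (W.pcomp W) (∑ k ∈ s, X k)
    rwa [hcoe, hval] at this
  have hfg : (f, g) ∈ (W.pcomp W).graph :=
    hcl.mem_of_tendsto htend (Filter.Eventually.of_forall hmemgraph)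
  obtain ⟨z, hz1, hz2⟩ := (LinearPMap.mem_graph_iff _).1 hfg
  have hzf : f = ↑z := by simpa using hz1.symm
  rw [hzf]
  exact z.2
end


/-- for a unilateral weighted shift `W_λ` in `ℓ²(ℕ)`, the square `W_λ²`
is closed iff there is `c > 0` with `|λ_k|² ≤ c (1 + |λ_k λ_{k+1}|²)` for all `k`. -/
theorem stmt_10 (lam : ℕ → ℂ)
    (W : lp (fun _ : ℕ => ℂ) 2 →ₗ.[ℂ] lp (fun _ : ℕ => ℂ) 2)
    (hW : IsWeightedShift lam W) :
    (W.pcomp W).IsClosed ↔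
      ∃ c : ℝ, 0 < c ∧ ∀ k : ℕ, ‖lam k‖ ^ 2 ≤ c * (1 + ‖lam k * lam (k + 1)‖ ^ 2) := by
  constructor
  · intro hcl
    by_contra hc
    exact not_closed_of_not_cond hW hc hcl
  · intro hc
    exact closed_of_cond hW hc
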